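/- Let X be a locally compact Polish space, Y a Hausdorff space, f : X → Y a continuous bijection, and Z = { y ∈ Y : there exists an open neighborhood C of y with the closure of f⁻¹(C) compact }. Then Z with the subspace topology from Y is first countable. -/

import Mathlib

open Topology Filter Set

theorem stmt_7 {X Y : Type*} [TopologicalSpace X] [PolishSpace X]
    [LocallyCompactSpace X] [TopologicalSpace Y] [T2Space Y]
    (f : X → Y) (hf : Continuous f) (hbij : Function.Bijective f)
    (Z : Set Y)
    (hZ : Z = {y : Y | ∃ C : Set Y, IsOpen C ∧ y ∈ C ∧ IsCompact (closure (f ⁻¹' C))}) :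
    FirstCountableTopology Z := by
  letI := TopologicalSpace.upgradeIsCompletelyMetrizable X
  constructor
  intro z
  -- It suffices to show 𝓝 (z : Y) is countably generated
  suffices h : (𝓝 (z : Y)).IsCountablyGenerated by
    have : 𝓝 z = Filter.comap (Subtype.val) (𝓝 (z : Y)) := (nhds_subtype _ _)
    rw [this]
    exact Filter.comap.isCountablyGenerated _ _
  obtain ⟨C, hC, hyC, hK⟩ : (z : Y) ∈ {y : Y | ∃ C : Set Y, IsOpen C ∧ y ∈ C ∧ IsCompact (closure (f ⁻¹' C))} := hZ ▸ z.2
  set K : Set X := closure (f ⁻¹' C) with hKdef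
  haveI : CompactSpace K := isCompact_iff_compactSpace.mp hK
  set g : K → Y := f ∘ Subtype.val with hg
  have hgc : Continuous g := hf.comp continuous_subtype_val
  have hgi : Function.Injective g := fun a b hab =>
    Subtype.ext (hbij.1 hab)
  have hemb : IsEmbedding g := hgc.isClosedEmbedding hgi |>.toIsEmbedding
  obtain ⟨x, hx⟩ := hbij.2 (z : Y)
  have hxK : x ∈ K := subset_closure (by simp [hx, hyC])
  have hmap : Filter.map g (𝓝 (⟨x, hxK⟩ : K)) = 𝓝 (z : Y) := by
    rw [hemb.map_nhds_eq]
    have hrange : Set.range g = f '' K := by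
      rw [hg]; rw [Set.range_comp, Subtype.range_coe]
    rw [hrange]
    have : g ⟨x, hxK⟩ = (z : Y) := hx
    rw [this]
    apply nhdsWithin_eq_nhds.2
    have hsub : C ⊆ f '' K := by
      intro c hc
      obtain ⟨a, ha⟩ := hbij.2 c
      exact ⟨a, subset_closure (by simp [ha, hc]), ha⟩
    exact Filter.mem_of_superset (hC.mem_nhds hyC) hsub
  rw [← hmap]
  exact Filter.map.isCountablyGenerated _ _
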